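/- Let 0 < λN < λN1 be real numbers, let ε > 0 satisfy 1/ε ≥ 3·λN1 + λN, let θ ∈ ℝ satisfy 2θ(εθ − 1) + λN + λN1 = 0, and let λ ∈ ℝ satisfy λ ≤ λN or λ ≥ λN1. Suppose v : ℝ → ℝ is twice continuously differentiable, and v, v′, v″ all belong to L²(ℝ). Set g(t) := ε·v″(t) + (1 − 2εθ)·v′(t) + (λ + θ(εθ−1))·v(t). Then ‖v‖_{L²(ℝ)} ≤ (2/(λN1 − λN))·‖g‖_{L²(ℝ)}. -/

import Mathlib

open MeasureTheory Filter Set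

lemma my_deriv_zero (F F' : ℝ → ℝ) (hF : ∀ x, HasDerivAt F (F' x) x)
    (hFi : Integrable F) (hF'i : Integrable F') : ∫ x, F' x = 0 := by
  have htop : Tendsto F atTop (nhds 0) :=
    tendsto_zero_of_hasDerivAt_of_integrableOn_Ioi (a := 0) (fun x _ => hF x)
      hF'i.integrableOn hFi.integrableOn
  have hbot : Tendsto F atBot (nhds 0) :=
    tendsto_zero_of_hasDerivAt_of_integrableOn_Iic (a := 0) (fun x _ => hF x)
      hF'i.integrableOn hFi.integrableOn
  have h1 : ∫ x in Iic (0:ℝ), F' x = F 0 - 0 :=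
    integral_Iic_of_hasDerivAt_of_tendsto' (fun x _ => hF x) hF'i.integrableOn hbot
  have h2 : ∫ x in Ioi (0:ℝ), F' x = 0 - F 0 :=
    integral_Ioi_of_hasDerivAt_of_tendsto' (fun x _ => hF x) hF'i.integrableOn htop
  rw [← intervalIntegral.integral_Iic_add_Ioi (b := (0:ℝ)) hF'i.integrableOn hF'i.integrableOn,
    h1, h2]
  ring

lemma my_prod_int (f g : ℝ → ℝ) (hf : Continuous f) (hg : Continuous g)
    (hf2 : Integrable (fun t => f t ^ 2)) (hg2 : Integrable (fun t => g t ^ 2)) :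
    Integrable (fun t => f t * g t) := by
  refine Integrable.mono' ((hf2.add hg2).div_const 2) (hf.mul hg).aestronglyMeasurable ?_
  filter_upwards with t
  simp only [Pi.add_apply]
  rw [Real.norm_eq_abs, abs_mul]
  nlinarith [sq_nonneg (|f t| - |g t|), sq_abs (f t), sq_abs (g t)]

lemma my_amgm (a b : ℝ) : 4 * (a * b) ≤ (a + b) ^ 2 := by nlinarith [sq_nonneg (a - b)]

lemma my_abs (w S : ℝ) (h1 : w ^ 2 ≤ S ^ 2) (h2 : 0 ≤ S) : -S ≤ w := by
  nlinarith [sq_nonneg (S + w)]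

lemma my_cs (f g : ℝ → ℝ) (hf : Integrable (fun t => f t ^ 2))
    (hg : Integrable (fun t => g t ^ 2)) (hfg : Integrable (fun t => f t * g t)) :
    (∫ t, f t * g t) ^ 2 ≤ (∫ t, f t ^ 2) * ∫ t, g t ^ 2 := by
  set A := ∫ t, f t ^ 2 with hA
  set B := ∫ t, g t ^ 2 with hB
  set C := ∫ t, f t * g t with hC
  have hB0 : 0 ≤ B := integral_nonneg fun t => sq_nonneg _
  have hA0 : 0 ≤ A := integral_nonneg fun t => sq_nonneg _
  have key : ∀ r : ℝ, 0 ≤ A + 2 * r * C + r ^ 2 * B := by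
    intro r
    have e1 : Integrable (fun t => 2 * r * (f t * g t)) := hfg.const_mul _
    have e2 : Integrable (fun t => r ^ 2 * g t ^ 2) := hg.const_mul _
    have h2 : 0 ≤ ∫ t, (f t + r * g t) ^ 2 := integral_nonneg fun t => sq_nonneg _
    have h3 : (fun t => (f t + r * g t) ^ 2)
        = fun t => (f t ^ 2 + 2 * r * (f t * g t)) + r ^ 2 * g t ^ 2 := by
      funext t; ring
    have h4a : ∫ t, ((f t ^ 2 + 2 * r * (f t * g t)) + r ^ 2 * g t ^ 2)
        = (∫ t, (f t ^ 2 + 2 * r * (f t * g t))) + ∫ t, r ^ 2 * g t ^ 2 :=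
      integral_add (hf.add e1) e2
    have h4b : ∫ t, (f t ^ 2 + 2 * r * (f t * g t))
        = (∫ t, f t ^ 2) + ∫ t, 2 * r * (f t * g t) := integral_add hf e1
    have h4 : ∫ t, ((f t ^ 2 + 2 * r * (f t * g t)) + r ^ 2 * g t ^ 2)
        = A + 2 * r * C + r ^ 2 * B := by
      rw [h4a, h4b, integral_const_mul, integral_const_mul]
    rw [h3, h4] at h2
    exact h2
  rcases eq_or_lt_of_le hB0 with hB1 | hB1
  · rcases eq_or_ne C 0 with hC0 | hC0
    · rw [hC0, ← hB1]; simp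
    · exfalso
      have hr : 2 * (-(A + 1) / (2 * C)) * C = -(A + 1) := by field_simp
      have := key (-(A + 1) / (2 * C))
      rw [hr, ← hB1] at this
      simp at this
      linarith
  · have h5 : (A + 2 * (-C / B) * C + (-C / B) ^ 2 * B) * B = A * B - C ^ 2 := by
      field_simp
      ring
    have h6 := mul_nonneg (key (-C / B)) hB0
    rw [h5] at h6
    linarith

set_option maxHeartbeats 1000000 in
theorem stmt_4 (lamN lamN1 eps theta lam : ℝ)
    (hlamN : 0 < lamN) (hlt : lamN < lamN1)
    (heps : 0 < eps) (hgap : 1 / eps ≥ 3 * lamN1 + lamN)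
    (htheta : 2 * theta * (eps * theta - 1) + lamN + lamN1 = 0)
    (hlam : lam ≤ lamN ∨ lam ≥ lamN1)
    (v : ℝ → ℝ) (hv : ContDiff ℝ 2 v)
    (hv2 : Integrable (fun t => (v t) ^ 2))
    (hv'2 : Integrable (fun t => (deriv v t) ^ 2))
    (hv''2 : Integrable (fun t => (deriv (deriv v) t) ^ 2)) :
    Real.sqrt (∫ t : ℝ, (v t) ^ 2)
      ≤ (2 / (lamN1 - lamN)) *
        Real.sqrt (∫ t : ℝ,
          (eps * deriv (deriv v) t + (1 - 2 * eps * theta) * deriv v t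
            + (lam + theta * (eps * theta - 1)) * v t) ^ 2) := by
  have h2' : ((1:WithTop ℕ∞) + 1) = 2 := by norm_num
  have hsd := contDiff_succ_iff_deriv.mp (h2' ▸ hv)
  have hvdiff : Differentiable ℝ v := hsd.1
  have hv'cd : ContDiff ℝ 1 (deriv v) := hsd.2.2
  have hv'diff : Differentiable ℝ (deriv v) := hv'cd.differentiable one_ne_zero
  have hcv : Continuous v := hv.continuous
  have hcv' : Continuous (deriv v) := hv'cd.continuous
  have hcv'' : Continuous (deriv (deriv v)) := (contDiff_one_iff_deriv.mp hv'cd).2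
  have hd1 : ∀ x, HasDerivAt v (deriv v x) x := fun x => (hvdiff x).hasDerivAt
  have hd2 : ∀ x, HasDerivAt (deriv v) (deriv (deriv v) x) x := fun x => (hv'diff x).hasDerivAt
  have i01 : Integrable (fun t => v t * deriv v t) := my_prod_int _ _ hcv hcv' hv2 hv'2
  have i02 : Integrable (fun t => v t * deriv (deriv v) t) := my_prod_int _ _ hcv hcv'' hv2 hv''2
  have i12 : Integrable (fun t => deriv v t * deriv (deriv v) t) :=
    my_prod_int _ _ hcv' hcv'' hv'2 hv''2
  have ivv : Integrable (fun t => v t * v t) := by simpa [pow_two] using hv2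
  have iv'v' : Integrable (fun t => deriv v t * deriv v t) := by simpa [pow_two] using hv'2
  set b := 1 - 2 * eps * theta with hb
  set c := lam + theta * (eps * theta - 1) with hc
  set X := ∫ t : ℝ, (v t) ^ 2 with hX
  set Y := ∫ t : ℝ, (deriv v t) ^ 2 with hYdef
  set Z := ∫ t : ℝ, (deriv (deriv v) t) ^ 2 with hZdef
  have hX0 : 0 ≤ X := integral_nonneg fun t => sq_nonneg _
  have hY0 : 0 ≤ Y := integral_nonneg fun t => sq_nonneg _
  have hZ0 : 0 ≤ Z := integral_nonneg fun t => sq_nonneg _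
  clear_value b c X Y Z
  -- ∫ v v' = 0
  have hI1 : ∫ t, v t * deriv v t = 0 := by
    have hder : ∀ x, HasDerivAt (fun t => v t * v t) (2 * (v x * deriv v x)) x := by
      intro x
      have h := (hd1 x).mul (hd1 x)
      exact h.congr_deriv (by ring)
    have h0 := my_deriv_zero _ _ hder ivv (i01.const_mul 2)
    rw [integral_const_mul] at h0
    linarith
  -- ∫ v' v'' = 0
  have hI2 : ∫ t, deriv v t * deriv (deriv v) t = 0 := by
    have hder : ∀ x, HasDerivAt (fun t => deriv v t * deriv v t)
        (2 * (deriv v x * deriv (deriv v) x)) x := by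
      intro x
      have h := (hd2 x).mul (hd2 x)
      exact h.congr_deriv (by ring)
    have h0 := my_deriv_zero _ _ hder iv'v' (i12.const_mul 2)
    rw [integral_const_mul] at h0
    linarith
  -- ∫ v v'' = -Y
  have hW : ∫ t, v t * deriv (deriv v) t = -Y := by
    have hder : ∀ x, HasDerivAt (fun t => v t * deriv v t)
        (deriv v x * deriv v x + v x * deriv (deriv v) x) x :=
      fun x => (hd1 x).mul (hd2 x)
    have h0 := my_deriv_zero _ _ hder i01 (iv'v'.add i02)
    have hsplit : ∫ x, (deriv v x * deriv v x + v x * deriv (deriv v) x)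
        = (∫ x, deriv v x * deriv v x) + ∫ x, v x * deriv (deriv v) x :=
      integral_add iv'v' i02
    have hvv : ∫ x, deriv v x * deriv v x = Y := by
      rw [hYdef]
      congr 1
      funext x
      ring
    rw [hsplit, hvv] at h0
    linarith
  -- Cauchy-Schwarz : Y^2 ≤ X * Z
  have hCS : Y ^ 2 ≤ X * Z := by
    have h := my_cs v (deriv (deriv v)) hv2 hv''2 i02
    rw [hW] at h
    rw [← hX, ← hZdef] at h
    simpa [neg_sq] using h
  -- expansion of the integral of g^2
  have i1 : Integrable (fun t => eps ^ 2 * (deriv (deriv v) t) ^ 2) := hv''2.const_mul _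
  have i2 : Integrable (fun t => b ^ 2 * (deriv v t) ^ 2) := hv'2.const_mul _
  have i3 : Integrable (fun t => c ^ 2 * (v t) ^ 2) := hv2.const_mul _
  have i4 : Integrable (fun t => 2 * eps * b * (deriv v t * deriv (deriv v) t)) :=
    i12.const_mul _
  have i5 : Integrable (fun t => 2 * eps * c * (v t * deriv (deriv v) t)) := i02.const_mul _
  have i6 : Integrable (fun t => 2 * b * c * (v t * deriv v t)) := i01.const_mul _
  have hexp : (fun t => (eps * deriv (deriv v) t + b * deriv v t + c * v t) ^ 2)
      = fun t => ((((eps ^ 2 * (deriv (deriv v) t) ^ 2 + b ^ 2 * (deriv v t) ^ 2)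
          + c ^ 2 * (v t) ^ 2) + 2 * eps * b * (deriv v t * deriv (deriv v) t))
          + 2 * eps * c * (v t * deriv (deriv v) t)) + 2 * b * c * (v t * deriv v t) := by
    funext t
    ring
  have E5 : ∫ t, (((((eps ^ 2 * (deriv (deriv v) t) ^ 2 + b ^ 2 * (deriv v t) ^ 2)
          + c ^ 2 * (v t) ^ 2) + 2 * eps * b * (deriv v t * deriv (deriv v) t))
          + 2 * eps * c * (v t * deriv (deriv v) t)) + 2 * b * c * (v t * deriv v t))
      = (∫ t, ((((eps ^ 2 * (deriv (deriv v) t) ^ 2 + b ^ 2 * (deriv v t) ^ 2)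
          + c ^ 2 * (v t) ^ 2) + 2 * eps * b * (deriv v t * deriv (deriv v) t))
          + 2 * eps * c * (v t * deriv (deriv v) t))) + ∫ t, 2 * b * c * (v t * deriv v t) :=
    integral_add ((((i1.add i2).add i3).add i4).add i5) i6
  have E4 : ∫ t, ((((eps ^ 2 * (deriv (deriv v) t) ^ 2 + b ^ 2 * (deriv v t) ^ 2)
          + c ^ 2 * (v t) ^ 2) + 2 * eps * b * (deriv v t * deriv (deriv v) t))
          + 2 * eps * c * (v t * deriv (deriv v) t))
      = (∫ t, (((eps ^ 2 * (deriv (deriv v) t) ^ 2 + b ^ 2 * (deriv v t) ^ 2)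
          + c ^ 2 * (v t) ^ 2) + 2 * eps * b * (deriv v t * deriv (deriv v) t)))
        + ∫ t, 2 * eps * c * (v t * deriv (deriv v) t) :=
    integral_add (((i1.add i2).add i3).add i4) i5
  have E3 : ∫ t, (((eps ^ 2 * (deriv (deriv v) t) ^ 2 + b ^ 2 * (deriv v t) ^ 2)
          + c ^ 2 * (v t) ^ 2) + 2 * eps * b * (deriv v t * deriv (deriv v) t))
      = (∫ t, ((eps ^ 2 * (deriv (deriv v) t) ^ 2 + b ^ 2 * (deriv v t) ^ 2)
          + c ^ 2 * (v t) ^ 2)) + ∫ t, 2 * eps * b * (deriv v t * deriv (deriv v) t) :=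
    integral_add ((i1.add i2).add i3) i4
  have E2 : ∫ t, ((eps ^ 2 * (deriv (deriv v) t) ^ 2 + b ^ 2 * (deriv v t) ^ 2)
          + c ^ 2 * (v t) ^ 2)
      = (∫ t, (eps ^ 2 * (deriv (deriv v) t) ^ 2 + b ^ 2 * (deriv v t) ^ 2))
        + ∫ t, c ^ 2 * (v t) ^ 2 :=
    integral_add (i1.add i2) i3
  have E1 : ∫ t, (eps ^ 2 * (deriv (deriv v) t) ^ 2 + b ^ 2 * (deriv v t) ^ 2)
      = (∫ t, eps ^ 2 * (deriv (deriv v) t) ^ 2) + ∫ t, b ^ 2 * (deriv v t) ^ 2 :=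
    integral_add i1 i2
  have hEXP : ∫ t, (eps * deriv (deriv v) t + b * deriv v t + c * v t) ^ 2
      = eps ^ 2 * Z + b ^ 2 * Y + c ^ 2 * X + 2 * eps * b * 0 + 2 * eps * c * (-Y)
        + 2 * b * c * 0 := by
    rw [hexp, E5, E4, E3, E2, E1, integral_const_mul, integral_const_mul, integral_const_mul,
      integral_const_mul, integral_const_mul, integral_const_mul, hI1, hI2, hW, ← hX, ← hYdef,
      ← hZdef]
  -- algebraic identities from htheta
  have hb2 : b ^ 2 = 1 - 2 * eps * (lamN + lamN1) := by
    rw [hb]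
    linear_combination 2 * eps * htheta
  have hc2 : c = lam - (lamN + lamN1) / 2 := by
    rw [hc]
    linear_combination htheta / 2
  have hgap' : eps * (3 * lamN1 + lamN) ≤ 1 := by
    rw [ge_iff_le, le_div_iff₀ heps] at hgap
    linarith
  -- key inequality
  have key : ((lamN1 - lamN) / 2) ^ 2 * X
      ≤ ∫ t, (eps * deriv (deriv v) t + b * deriv v t + c * v t) ^ 2 := by
    rw [hEXP, hb2, hc2]
    rcases hlam with h | h
    · -- lam ≤ lamN : coefficient of Y is nonneg, c² ≥ k²
      have hbeta : 0 ≤ 1 - eps * (lamN + lamN1) - 2 * eps * lam := by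
        have p := mul_le_mul_of_nonneg_left h heps.le
        have q := mul_le_mul_of_nonneg_left
          (show 3 * lamN + lamN1 ≤ 3 * lamN1 + lamN by linarith) heps.le
        linarith [hgap', p, q]
      have hkc : ((lamN1 - lamN) / 2) ^ 2 ≤ (lam - (lamN + lamN1) / 2) ^ 2 := by nlinarith
      linarith [mul_nonneg hbeta hY0, mul_nonneg (sq_nonneg eps) hZ0,
        mul_le_mul_of_nonneg_right hkc hX0]
    · -- lam ≥ lamN1
      by_cases hb0 : 0 ≤ 1 - eps * (lamN + lamN1) - 2 * eps * lam
      · have hkc : ((lamN1 - lamN) / 2) ^ 2 ≤ (lam - (lamN + lamN1) / 2) ^ 2 := by nlinarith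
        linarith [mul_nonneg hb0 hY0, mul_nonneg (sq_nonneg eps) hZ0,
          mul_le_mul_of_nonneg_right hkc hX0]
      · push_neg at hb0
        have hc1 : 0 ≤ 1 - eps * (3 * lamN1 + lamN) := by linarith
        have hc2' : 0 ≤ eps * (lamN + lamN1 + 2 * lam) - 1 := by nlinarith
        have hc3 : 0 ≤ lam - lamN1 := by linarith
        have hc4 : 0 ≤ lamN1 - lamN := by linarith
        have hcert : (1 - eps * (lamN + lamN1 + 2 * lam)) ^ 2
            ≤ 4 * eps ^ 2 * ((lam - lamN) * (lam - lamN1)) := by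
          nlinarith [mul_nonneg (mul_nonneg heps.le hc1) hc3, mul_nonneg hc1 hc2',
            mul_nonneg (mul_nonneg (mul_nonneg heps.le heps.le) hc3) hc4]
        have hg0 : 0 ≤ (lam - lamN) * (lam - lamN1) := mul_nonneg (by linarith) hc3
        have hS0 : 0 ≤ eps ^ 2 * Z + ((lam - lamN) * (lam - lamN1)) * X :=
          add_nonneg (mul_nonneg (sq_nonneg _) hZ0) (mul_nonneg hg0 hX0)
        have p1 : (1 - eps * (lamN + lamN1 + 2 * lam)) ^ 2 * Y ^ 2
            ≤ (4 * eps ^ 2 * ((lam - lamN) * (lam - lamN1))) * Y ^ 2 :=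
          mul_le_mul_of_nonneg_right hcert (sq_nonneg Y)
        have p2 : (4 * eps ^ 2 * ((lam - lamN) * (lam - lamN1))) * Y ^ 2
            ≤ (4 * eps ^ 2 * ((lam - lamN) * (lam - lamN1))) * (X * Z) :=
          mul_le_mul_of_nonneg_left hCS
            (mul_nonneg (by positivity) hg0)
        have p3 : (4 * eps ^ 2 * ((lam - lamN) * (lam - lamN1))) * (X * Z)
            ≤ (eps ^ 2 * Z + ((lam - lamN) * (lam - lamN1)) * X) ^ 2 := by
          linarith [my_amgm (eps ^ 2 * Z) (((lam - lamN) * (lam - lamN1)) * X)]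
        have h1 : ((1 - eps * (lamN + lamN1 + 2 * lam)) * Y) ^ 2
            ≤ (eps ^ 2 * Z + ((lam - lamN) * (lam - lamN1)) * X) ^ 2 := by
          linarith [p1, p2, p3]
        have h2 : -(eps ^ 2 * Z + ((lam - lamN) * (lam - lamN1)) * X)
            ≤ (1 - eps * (lamN + lamN1 + 2 * lam)) * Y := my_abs _ _ h1 hS0
        linarith [h2]
  -- conclude with square roots
  have hG0 : 0 ≤ ∫ t, (eps * deriv (deriv v) t + b * deriv v t + c * v t) ^ 2 :=
    integral_nonneg fun t => sq_nonneg _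
  have hdpos : (0:ℝ) < lamN1 - lamN := by linarith
  have hdne : lamN1 - lamN ≠ 0 := ne_of_gt hdpos
  have h9 : (2 / (lamN1 - lamN)) ^ 2 * (((lamN1 - lamN) / 2) ^ 2 * X) = X := by
    field_simp
  have hmain : X ≤ (2 / (lamN1 - lamN)) ^ 2
      * ∫ t, (eps * deriv (deriv v) t + b * deriv v t + c * v t) ^ 2 := by
    calc X = (2 / (lamN1 - lamN)) ^ 2 * (((lamN1 - lamN) / 2) ^ 2 * X) := h9.symm
      _ ≤ (2 / (lamN1 - lamN)) ^ 2
          * ∫ t, (eps * deriv (deriv v) t + b * deriv v t + c * v t) ^ 2 :=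
        mul_le_mul_of_nonneg_left key (by positivity)
  calc Real.sqrt X
      ≤ Real.sqrt ((2 / (lamN1 - lamN)) ^ 2
        * ∫ t, (eps * deriv (deriv v) t + b * deriv v t + c * v t) ^ 2) :=
        Real.sqrt_le_sqrt hmain
    _ = (2 / (lamN1 - lamN))
        * Real.sqrt (∫ t, (eps * deriv (deriv v) t + b * deriv v t + c * v t) ^ 2) := by
        rw [Real.sqrt_mul (sq_nonneg _), Real.sqrt_sq (by positivity)]
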